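/- Let f_1, ..., f_m ∈ Z[x_1,...,x_n] be polynomials with no common zero over the algebraic closure of Q. Then there exists a nonzero integer a and polynomials g_1, ..., g_m ∈ Z[x_1,...,x_n] such that a = f_1·g_1 + ... + f_m·g_m. -/

import Mathlib

open MvPolynomial

lemma span_map_eq_top {n m : ℕ} (f : Fin m → MvPolynomial (Fin n) ℤ)
    (hnz : ¬ ∃ x : Fin n → AlgebraicClosure ℚ, ∀ i, MvPolynomial.aeval x (f i) = 0) :
    Ideal.span (Set.range fun i => (MvPolynomial.map (Int.castRingHom ℚ)) (f i)) = ⊤ := by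
  set F : Fin m → MvPolynomial (Fin n) ℚ :=
    fun i => (MvPolynomial.map (Int.castRingHom ℚ)) (f i) with hF
  by_contra hI
  obtain ⟨P, hPmax, hIP⟩ := Ideal.exists_le_maximal _ hI
  letI : Field (MvPolynomial (Fin n) ℚ ⧸ P) := Ideal.Quotient.field P
  have hint : (RingHom.comp (Ideal.Quotient.mk P) (MvPolynomial.C)).IsIntegral :=
    MvPolynomial.quotient_mk_comp_C_isIntegral_of_isJacobsonRing P
  haveI : Algebra.IsIntegral ℚ (MvPolynomial (Fin n) ℚ ⧸ P) := ⟨hint⟩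
  haveI : Algebra.IsAlgebraic ℚ (MvPolynomial (Fin n) ℚ ⧸ P) :=
    Algebra.IsIntegral.isAlgebraic
  haveI : NoZeroSMulDivisors ℚ (MvPolynomial (Fin n) ℚ ⧸ P) :=
    inferInstance
  let φ : (MvPolynomial (Fin n) ℚ ⧸ P) →ₐ[ℚ] AlgebraicClosure ℚ :=
    IsAlgClosed.lift
  refine hnz ⟨fun j => φ (Ideal.Quotient.mk P (MvPolynomial.X j)), fun i => ?_⟩
  have key : MvPolynomial.aeval (fun j => φ (Ideal.Quotient.mk P (MvPolynomial.X j))) (F i)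
      = φ (Ideal.Quotient.mk P (F i)) := by
    have : (MvPolynomial.aeval fun j => φ (Ideal.Quotient.mk P (MvPolynomial.X j)))
        = φ.comp (Ideal.Quotient.mkₐ ℚ P) := by
      apply MvPolynomial.algHom_ext
      intro j
      simp
    rw [this]
    rfl
  have hmem : F i ∈ P := hIP (Ideal.subset_span ⟨i, rfl⟩)
  have : MvPolynomial.aeval (fun j => φ (Ideal.Quotient.mk P (MvPolynomial.X j))) (f i)
      = MvPolynomial.aeval (fun j => φ (Ideal.Quotient.mk P (MvPolynomial.X j))) (F i) := by
    rw [hF]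
    exact (MvPolynomial.aeval_map_algebraMap _ _ _).symm
  rw [this, key, (Ideal.Quotient.eq_zero_iff_mem).2 hmem, map_zero]

/-- Integral Nullstellensatz: if `f_1, …, f_m ∈ ℤ[x_1, …, x_n]` have no common zero over
the algebraic closure of `ℚ`, then some nonzero integer `a` lies in the ideal generated
by the `f_i` over `ℤ`. -/
theorem integral_nullstellensatz {n m : ℕ} (f : Fin m → MvPolynomial (Fin n) ℤ)
    (hnz : ¬ ∃ x : Fin n → AlgebraicClosure ℚ, ∀ i, MvPolynomial.aeval x (f i) = 0) :
    ∃ a : ℤ, a ≠ 0 ∧ ∃ g : Fin m → MvPolynomial (Fin n) ℤ,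
      (MvPolynomial.C a : MvPolynomial (Fin n) ℤ) = ∑ i, f i * g i := by
  classical
  have htop := span_map_eq_top f hnz
  set F : Fin m → MvPolynomial (Fin n) ℚ :=
    fun i => (MvPolynomial.map (Int.castRingHom ℚ)) (f i) with hF
  have h1 : (1 : MvPolynomial (Fin n) ℚ) ∈ Ideal.span (Set.range F) := htop ▸ Submodule.mem_top
  obtain ⟨h, hh⟩ := Ideal.mem_span_range_iff_exists_fun.mp h1
  -- clear denominators
  letI : Algebra (MvPolynomial (Fin n) ℤ) (MvPolynomial (Fin n) ℚ) :=
    MvPolynomial.algebraMvPolynomial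
  haveI : IsLocalization ((nonZeroDivisors ℤ).map (MvPolynomial.C (σ := Fin n)))
      (MvPolynomial (Fin n) ℚ) := MvPolynomial.isLocalization _ _
  obtain ⟨b, hb⟩ := IsLocalization.exist_integer_multiples_of_finite
    ((nonZeroDivisors ℤ).map (MvPolynomial.C (σ := Fin n))) h
  obtain ⟨d, hd, hbd⟩ := b.property
  choose g hg using fun i => hb i
  refine ⟨d, nonZeroDivisors.ne_zero hd, g, ?_⟩
  have halg : ∀ p : MvPolynomial (Fin n) ℤ,
      algebraMap (MvPolynomial (Fin n) ℤ) (MvPolynomial (Fin n) ℚ) p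
        = MvPolynomial.map (Int.castRingHom ℚ) p := fun p => rfl
  apply MvPolynomial.map_injective (Int.castRingHom ℚ) Int.cast_injective
  rw [MvPolynomial.map_C, map_sum]
  have key : ∀ i ∈ Finset.univ, MvPolynomial.map (Int.castRingHom ℚ) (f i * g i)
      = MvPolynomial.C ((Int.castRingHom ℚ) d) * (h i * F i) := by
    intro i _
    rw [map_mul, ← halg (g i), hg i, ← hbd, Algebra.smul_def, halg, MvPolynomial.map_C]
    simp only [hF]
    ring
  rw [Finset.sum_congr rfl key, ← Finset.mul_sum, hh, mul_one]
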